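/- Let (Ω,Σ,μ) be a finite measure space, (M,d) a metric space, and φ : Σ → [0,∞) an increasing bounded set function. Let T : M → L^1(μ) satisfy: for all x,y ∈ M and all A ∈ Σ, sup_{B∈Σ, B⊆A} |∫_B (T(x) − T(y)) dμ| ≤ φ(A)·d(x,y). For each x ∈ M define ν̂_x(A) := sup_{y∈M} { ∫_A T(y) dμ − φ(A)·d(x,y) } for A ∈ Σ. Then for every x ∈ M and every A ∈ Σ: (i) ν̂_x(A) = ∫_A T(x) dμ, so ν̂_x is a countably additive μ-continuous measure; (ii) sup_{A∈Σ} |ν̂_x(A)| = sup_{A∈Σ} |∫_A T(x) dμ|; (iii) the total variation of ν̂_x equals ‖T(x)‖_{L^1(μ)}; and (iv) |ν̂_x(A) − ν̂_y(A)| ≤ φ(A)·d(x,y) for all x,y ∈ M. -/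

import Mathlib

open MeasureTheory
open scoped ENNReal NNReal

private lemma totalVariation_withDensityL1 {Ω : Type*} [MeasurableSpace Ω]
    (μ : Measure Ω) [IsFiniteMeasure μ] (f : Lp ℝ 1 μ) :
    (SignedMeasure.totalVariation (μ.withDensityᵥ fun ω => f ω) Set.univ).toReal = ‖f‖ := by
  have hfi : Integrable (fun ω => f ω) μ := L1.integrable_coeFn f
  set g : Ω → ℝ := hfi.1.mk _ with hg_def
  have hgm : Measurable g := hfi.1.stronglyMeasurable_mk.measurable
  have hfg : (fun ω => f ω) =ᵐ[μ] g := hfi.1.ae_eq_mk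
  have hgi : Integrable g μ := hfi.congr hfg
  have hν : μ.withDensityᵥ (fun ω => f ω) = 0 + μ.withDensityᵥ g := by
    rw [zero_add]; exact WithDensityᵥEq.congr_ae hfg
  have hjd := SignedMeasure.toJordanDecomposition_eq_of_eq_add_withDensity hgm hgi
    (VectorMeasure.MutuallySingular.zero_left) hν
  have hdef : SignedMeasure.totalVariation (μ.withDensityᵥ fun ω => f ω) =
      (SignedMeasure.toJordanDecomposition (μ.withDensityᵥ fun ω => f ω)).posPart +
        (SignedMeasure.toJordanDecomposition (μ.withDensityᵥ fun ω => f ω)).negPart := rfl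
  have htv : SignedMeasure.totalVariation (μ.withDensityᵥ fun ω => f ω) =
      (μ.withDensity fun ω => ENNReal.ofReal (g ω)) +
        (μ.withDensity fun ω => ENNReal.ofReal (-g ω)) := by
    rw [hdef, hjd]
    simp [SignedMeasure.toJordanDecomposition_zero]
  rw [htv]
  have h1 : ((μ.withDensity fun ω => ENNReal.ofReal (g ω)) +
      (μ.withDensity fun ω => ENNReal.ofReal (-g ω))) Set.univ =
      ∫⁻ ω, (‖f ω‖₊ : ℝ≥0∞) ∂μ := by
    rw [Measure.add_apply, withDensity_apply _ MeasurableSet.univ,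
      withDensity_apply _ MeasurableSet.univ, Measure.restrict_univ,
      ← lintegral_add_left (by measurability)]
    refine lintegral_congr_ae ?_
    filter_upwards [hfg] with ω hω
    rw [← enorm_eq_nnnorm, Real.enorm_eq_ofReal_abs, hω]
    rcases le_total (g ω) 0 with h | h
    · rw [ENNReal.ofReal_eq_zero.2 h, zero_add, abs_of_nonpos h]
    · rw [ENNReal.ofReal_eq_zero.2 (neg_nonpos.2 h), add_zero, abs_of_nonneg h]
  rw [h1, L1.norm_def]; rfl

theorem phi_lipschitz_representing_measure_L1
    {Ω : Type*} [MeasurableSpace Ω] (μ : Measure Ω) [IsFiniteMeasure μ]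
    {M : Type*} [MetricSpace M]
    (φ : Set Ω → ℝ)
    (hφ_nonneg : ∀ A : Set Ω, MeasurableSet A → 0 ≤ φ A)
    (hφ_mono : ∀ A B : Set Ω, MeasurableSet A → MeasurableSet B → B ⊆ A → φ B ≤ φ A)
    (hφ_bdd : ∃ C : ℝ, ∀ A : Set Ω, MeasurableSet A → φ A ≤ C)
    (T : M → Lp ℝ 1 μ)
    (hT : ∀ x y : M, ∀ A : Set Ω, MeasurableSet A →
      (⨆ B : {B : Set Ω // MeasurableSet B ∧ B ⊆ A},
        |∫ ω in (B : Set Ω), (T x ω - T y ω) ∂μ|) ≤ φ A * dist x y) :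
    ∀ x : M,
      (∀ A : Set Ω, MeasurableSet A →
        (⨆ y : M, (∫ ω in A, T y ω ∂μ - φ A * dist x y)) = ∫ ω in A, T x ω ∂μ) ∧
      (∃ ν : SignedMeasure Ω,
        (∀ A : Set Ω, MeasurableSet A →
          ν A = ⨆ y : M, (∫ ω in A, T y ω ∂μ - φ A * dist x y)) ∧
        (∀ A : Set Ω, MeasurableSet A → μ A = 0 → ν A = 0) ∧
        (⨆ A : {A : Set Ω // MeasurableSet A}, |ν (A : Set Ω)|) =
          ⨆ A : {A : Set Ω // MeasurableSet A}, |∫ ω in (A : Set Ω), T x ω ∂μ| ∧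
        (ν.totalVariation Set.univ).toReal = ‖T x‖) ∧
      (∀ y : M, ∀ A : Set Ω, MeasurableSet A →
        |(⨆ z : M, (∫ ω in A, T z ω ∂μ - φ A * dist x z)) -
          (⨆ z : M, (∫ ω in A, T z ω ∂μ - φ A * dist y z))| ≤ φ A * dist x y) := by
  intro x
  haveI : Nonempty M := ⟨x⟩
  have hint : ∀ z : M, Integrable (fun ω => T z ω) μ := fun z => L1.integrable_coeFn (T z)
  -- key bound
  have key : ∀ u v : M, ∀ A : Set Ω, MeasurableSet A →
      |∫ ω in A, (T u ω - T v ω) ∂μ| ≤ φ A * dist u v := by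
    intro u v A hA
    refine le_trans ?_ (hT u v A hA)
    have hbdd : BddAbove (Set.range fun B : {B : Set Ω // MeasurableSet B ∧ B ⊆ A} =>
        |∫ ω in (B : Set Ω), (T u ω - T v ω) ∂μ|) := by
      refine ⟨∫ ω, |T u ω - T v ω| ∂μ, ?_⟩
      rintro _ ⟨B, rfl⟩
      calc |∫ ω in (B : Set Ω), (T u ω - T v ω) ∂μ|
          ≤ ∫ ω in (B : Set Ω), |T u ω - T v ω| ∂μ := (by simpa [Real.norm_eq_abs] using norm_integral_le_integral_norm (μ := μ.restrict (B:Set Ω)) fun ω => T u ω - T v ω)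
        _ ≤ ∫ ω, |T u ω - T v ω| ∂μ := by
            refine integral_mono_measure Measure.restrict_le_self ?_
              (((hint u).sub (hint v)).abs)
            exact ae_of_all _ fun ω => abs_nonneg _
    exact le_ciSup hbdd ⟨A, hA, subset_rfl⟩
  -- pointwise upper bound for the sup family
  have hub : ∀ w : M, ∀ A : Set Ω, MeasurableSet A → ∀ z : M,
      ∫ ω in A, T z ω ∂μ - φ A * dist w z ≤ ∫ ω in A, T w ω ∂μ := by
    intro w A hA z
    have h1 : ∫ ω in A, T z ω ∂μ - ∫ ω in A, T w ω ∂μ = ∫ ω in A, (T z ω - T w ω) ∂μ :=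
      (integral_sub (hint z).integrableOn (hint w).integrableOn).symm
    have h2 := (le_abs_self _).trans (key z w A hA)
    rw [← h1] at h2
    rw [dist_comm] at h2
    linarith
  have hbdd : ∀ w : M, ∀ A : Set Ω, MeasurableSet A →
      BddAbove (Set.range fun z : M => ∫ ω in A, T z ω ∂μ - φ A * dist w z) := by
    intro w A hA
    exact ⟨∫ ω in A, T w ω ∂μ, by rintro _ ⟨z, rfl⟩; exact hub w A hA z⟩
  have hsup : ∀ w : M, ∀ A : Set Ω, MeasurableSet A →
      (⨆ z : M, (∫ ω in A, T z ω ∂μ - φ A * dist w z)) = ∫ ω in A, T w ω ∂μ := by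
    intro w A hA
    refine le_antisymm (ciSup_le (hub w A hA)) ?_
    have := le_ciSup (hbdd w A hA) w
    simpa using this
  refine ⟨hsup x, ?_, ?_⟩
  · refine ⟨μ.withDensityᵥ fun ω => T x ω, ?_, ?_, ?_, ?_⟩
    · intro A hA
      rw [hsup x A hA, withDensityᵥ_apply (hint x) hA]
    · intro A hA hμA
      rw [withDensityᵥ_apply (hint x) hA, Measure.restrict_eq_zero.2 hμA,
        integral_zero_measure]
    · refine congrArg iSup (funext fun A => ?_)
      rw [withDensityᵥ_apply (hint x) A.2]
    · exact totalVariation_withDensityL1 μ (T x)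
  · intro y A hA
    rw [hsup x A hA, hsup y A hA]
    have h1 : ∫ ω in A, T x ω ∂μ - ∫ ω in A, T y ω ∂μ = ∫ ω in A, (T x ω - T y ω) ∂μ :=
      (integral_sub (hint x).integrableOn (hint y).integrableOn).symm
    rw [h1]
    exact key x y A hA
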